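/- arXiv:0706.3781 — 3 statements merged into one kernel-verified Lean document; each statement's English description precedes it below -/
import Mathlib

section
/- Momentum conservation under coalescence: the momentum moment of the coalescence term vanishes, i.e. ∫_{ℝ³} ∫₀^∞ v u Γ(v,u) dv du = 0 (as a vector in ℝ³, i.e. ∫∫ v u_j Γ dv du = 0 for each component j = 1,2,3). -/
open MeasureTheory Set

set_option maxHeartbeats 1600000

noncomputable section

abbrev V3 := Fin 3 → ℝ

/-- `β(v,v*) = π [(3v/(4π))^{1/3} + (3v*/(4π))^{1/3}]²`. -/
noncomputable def collBeta (v vs : ℝ) : ℝ :=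
  Real.pi * ((3 * v / (4 * Real.pi)) ^ ((1:ℝ)/3) + (3 * vs / (4 * Real.pi)) ^ ((1:ℝ)/3)) ^ 2

/-- Collision frequency `B(r, v, v*) = β(v,v*) r` with `r = |u - u*|`. -/
noncomputable def collB (r v vs : ℝ) : ℝ := collBeta v vs * r

/-- Coalescence loss term `Q⁻`. -/
noncomputable def Qminus (f : ℝ × V3 → ℝ) (v : ℝ) (u : V3) : ℝ :=
  - ∫ us : V3, ∫ vs in Ioi (0:ℝ), collB ‖u - us‖ v vs * f (v, u) * f (vs, us)

/-- Coalescence gain term `Q⁺`, with `v⋄ = v - v*`, `u⋄ = (v u - v* u*)/(v - v*)`,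
and Jacobian `J = (v/v⋄)³`. -/
noncomputable def Qplus (f : ℝ × V3 → ℝ) (v : ℝ) (u : V3) : ℝ :=
  (1/2) * ∫ us : V3, ∫ vs in Ioo (0:ℝ) v,
    collB ‖(v - vs)⁻¹ • (v • u - vs • us) - us‖ (v - vs) vs *
      f (v - vs, (v - vs)⁻¹ • (v • u - vs • us)) * f (vs, us) * (v / (v - vs)) ^ 3

/-- Coalescence operator `Γ = Q⁻ + Q⁺`. -/
noncomputable def coalGamma (f : ℝ × V3 → ℝ) (v : ℝ) (u : V3) : ℝ :=
  Qminus f v u + Qplus f v u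

/-! ### Auxiliary definitions and lemmas -/

namespace CoalAux

/-- The product measure on `ℝ × V3` (definitionally equal to `volume`). -/
abbrev volP : Measure (ℝ × V3) := (volume : Measure ℝ).prod (volume : Measure V3)

instance : IsFiniteMeasureOnCompacts (volume : Measure ((ℝ × V3) × (ℝ × V3))) :=
  Measure.prod.instIsFiniteMeasureOnCompacts _ _

/-- The momentum weight `v * u j`. -/
noncomputable def wgt (j : Fin 3) (p : ℝ × V3) : ℝ := p.1 * p.2 j

/-- The symmetric collision kernel `B(|u-u*|,v,v*) f(v,u) f(v*,u*)`. -/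
noncomputable def K0 (f : ℝ × V3 → ℝ) (p q : ℝ × V3) : ℝ :=
  collB ‖p.2 - q.2‖ p.1 q.1 * f p * f q

/-- The gain integrand. -/
noncomputable def G0 (f : ℝ × V3 → ℝ) (p q : ℝ × V3) : ℝ :=
  collB ‖(p.1 - q.1)⁻¹ • (p.1 • p.2 - q.1 • q.2) - q.2‖ (p.1 - q.1) q.1 *
    f (p.1 - q.1, (p.1 - q.1)⁻¹ • (p.1 • p.2 - q.1 • q.2)) * f q * (p.1 / (p.1 - q.1)) ^ 3

lemma continuous_cbrt : Continuous fun x : ℝ => x ^ ((1:ℝ)/3) := by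
  rw [continuous_iff_continuousAt]
  intro x
  exact Real.continuousAt_rpow_const x _ (Or.inr (by norm_num))

lemma continuous_collBeta : Continuous fun p : ℝ × ℝ => collBeta p.1 p.2 := by
  have hc : Continuous fun x : ℝ => (3 * x / (4 * Real.pi)) ^ ((1:ℝ)/3) :=
    continuous_cbrt.comp ((continuous_const.mul continuous_id).div_const _)
  have h1 : Continuous fun p : ℝ × ℝ => (3 * p.1 / (4 * Real.pi)) ^ ((1:ℝ)/3) :=
    hc.comp continuous_fst
  have h2 : Continuous fun p : ℝ × ℝ => (3 * p.2 / (4 * Real.pi)) ^ ((1:ℝ)/3) :=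
    hc.comp continuous_snd
  unfold collBeta
  exact continuous_const.mul ((h1.add h2).pow 2)

lemma continuous_wgt (j : Fin 3) : Continuous fun p : ℝ × V3 => wgt j p := by
  unfold wgt
  exact continuous_fst.mul ((continuous_apply j).comp continuous_snd)

section Main

variable {f : ℝ × V3 → ℝ}

lemma fzero (hf_supp : Function.support f ⊆ Ioi (0:ℝ) ×ˢ (univ : Set V3))
    {v : ℝ} (hv : v ≤ 0) (u : V3) : f (v, u) = 0 := by
  by_contra h
  have h2 := hf_supp (Function.mem_support.2 h)
  exact absurd h2.1 (by simpa using hv)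

lemma fzero' (hf_supp : Function.support f ⊆ Ioi (0:ℝ) ×ˢ (univ : Set V3))
    {q : ℝ × V3} (hq : q.1 ≤ 0) : f q = 0 := by
  have := fzero hf_supp hq q.2
  simpa using this

lemma continuous_collBeta_comp {α : Type*} [TopologicalSpace α] {a b : α → ℝ}
    (ha : Continuous a) (hb : Continuous b) :
    Continuous fun x : α => collBeta (a x) (b x) := by
  unfold collBeta
  have h1 : Continuous fun x : α => 3 * a x / (4 * Real.pi) :=
    (continuous_const.mul ha).div_const _
  have h2 : Continuous fun x : α => 3 * b x / (4 * Real.pi) :=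
    (continuous_const.mul hb).div_const _
  exact continuous_const.mul
    (((continuous_cbrt.comp h1).add (continuous_cbrt.comp h2)).pow 2)

/-- Continuity of the kernel as a function of both pairs. -/
lemma contK (hf_cont : Continuous f) :
    Continuous fun x : (ℝ × V3) × (ℝ × V3) => K0 f x.1 x.2 := by
  unfold K0 collB
  have hβ : Continuous fun x : (ℝ × V3) × (ℝ × V3) => collBeta x.1.1 x.2.1 :=
    continuous_collBeta_comp continuous_fst.fst continuous_snd.fst
  have hnrm : Continuous fun x : (ℝ × V3) × (ℝ × V3) => ‖x.1.2 - x.2.2‖ :=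
    (continuous_fst.snd.sub continuous_snd.snd).norm
  exact (((hβ.mul hnrm).mul (hf_cont.comp continuous_fst)).mul (hf_cont.comp continuous_snd))

lemma contKq (hf_cont : Continuous f) (q : ℝ × V3) :
    Continuous fun p : ℝ × V3 => K0 f p q := by
  unfold K0 collB
  have hβ : Continuous fun p : ℝ × V3 => collBeta p.1 q.1 :=
    continuous_collBeta_comp continuous_fst continuous_const
  have hnrm : Continuous fun p : ℝ × V3 => ‖p.2 - q.2‖ :=
    (continuous_snd.sub continuous_const).norm
  exact ((hβ.mul hnrm).mul hf_cont).mul continuous_const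

/-- Integrability of (continuous weight) × kernel on the 8-dimensional product space. -/
lemma integrableW (hf_cont : Continuous f) (hf_cpt : HasCompactSupport f)
    {W : (ℝ × V3) × (ℝ × V3) → ℝ} (hW : Continuous W) :
    Integrable (fun x : (ℝ × V3) × (ℝ × V3) => W x * K0 f x.1 x.2) (volP.prod volP) := by
  have h : Integrable (fun x : (ℝ × V3) × (ℝ × V3) => W x * K0 f x.1 x.2)
      (volume : Measure ((ℝ × V3) × (ℝ × V3))) := by
    apply Continuous.integrable_of_hasCompactSupport (hW.mul (contK hf_cont))
    apply HasCompactSupport.intro (hf_cpt.prod hf_cpt)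
    intro x hx
    rcases not_and_or.1 (by simpa [Set.mem_prod] using hx) with h | h
    · have : f x.1 = 0 := image_eq_zero_of_notMem_tsupport h
      simp [K0, this]
    · have : f x.2 = 0 := image_eq_zero_of_notMem_tsupport h
      simp [K0, this]
  exact h

/-- Integrability of (continuous weight) × kernel in the first pair, second pair fixed. -/
lemma integrableWq (hf_cont : Continuous f) (hf_cpt : HasCompactSupport f)
    {W : ℝ × V3 → ℝ} (hW : Continuous W) (q : ℝ × V3) :
    Integrable (fun p : ℝ × V3 => W p * K0 f p q) volP := by
  have h : Integrable (fun p : ℝ × V3 => W p * K0 f p q)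
      (volume : Measure (ℝ × V3)) := by
    apply Continuous.integrable_of_hasCompactSupport (hW.mul (contKq hf_cont q))
    apply HasCompactSupport.intro hf_cpt
    intro p hp
    have : f p = 0 := image_eq_zero_of_notMem_tsupport hp
    simp [K0, this]
  exact h

/-- Integrability of the kernel in the second pair, first pair fixed. -/
lemma integrableKp (hf_cont : Continuous f) (hf_cpt : HasCompactSupport f) (p : ℝ × V3) :
    Integrable (fun q : ℝ × V3 => K0 f p q) volP := by
  have hc : Continuous fun q : ℝ × V3 => K0 f p q := by
    unfold K0 collB
    have hβ : Continuous fun q : ℝ × V3 => collBeta p.1 q.1 :=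
      continuous_collBeta_comp continuous_const continuous_fst
    have hnrm : Continuous fun q : ℝ × V3 => ‖p.2 - q.2‖ :=
      (continuous_const.sub continuous_snd).norm
    exact ((hβ.mul hnrm).mul continuous_const).mul hf_cont
  have h : Integrable (fun q : ℝ × V3 => K0 f p q) (volume : Measure (ℝ × V3)) := by
    apply Continuous.integrable_of_hasCompactSupport hc
    apply HasCompactSupport.intro hf_cpt
    intro q hq
    have : f q = 0 := image_eq_zero_of_notMem_tsupport hq
    simp [K0, this]
  exact h

/-- Sections of (continuous weight) × kernel in the velocity variable are integrable. -/
lemma integrable_sect (hf_cont : Continuous f) (hf_cpt : HasCompactSupport f)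
    {W : ℝ × V3 → ℝ} (hW : Continuous W) (q : ℝ × V3) (w : ℝ) :
    Integrable (fun uw : V3 => W (w, uw) * K0 f (w, uw) q) (volume : Measure V3) := by
  have hins : Continuous fun uw : V3 => ((w, uw) : ℝ × V3) :=
    Continuous.prodMk continuous_const continuous_id
  have hc : Continuous fun uw : V3 => W (w, uw) * K0 f (w, uw) q := by
    simp only [K0, collB]
    have hnrm : Continuous fun uw : V3 => ‖uw - q.2‖ :=
      (continuous_id.sub continuous_const).norm
    have hfc : Continuous fun uw : V3 => f (w, uw) := hf_cont.comp hins
    exact (hW.comp hins).mul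
      (((continuous_const.mul hnrm).mul hfc).mul continuous_const)
  apply Continuous.integrable_of_hasCompactSupport hc
  apply HasCompactSupport.intro (hf_cpt.image continuous_snd)
  intro uw huw
  have : f (w, uw) = 0 := by
    by_contra h
    exact huw ⟨(w, uw), subset_tsupport f (Function.mem_support.2 h), rfl⟩
  simp [K0, this]

lemma measurable_Gw (hf_cont : Continuous f) (j : Fin 3) :
    Measurable fun x : (ℝ × V3) × (ℝ × V3) => wgt j x.1 * G0 f x.1 x.2 := by
  have hsmul : Measurable fun z : ℝ × V3 => z.1 • z.2 :=
    measurable_fst.smul measurable_snd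
  have hvec : Measurable fun x : (ℝ × V3) × (ℝ × V3) =>
      x.1.1 • x.1.2 - x.2.1 • x.2.2 := by
    have h1 : Measurable fun x : (ℝ × V3) × (ℝ × V3) => x.1.1 • x.1.2 :=
      hsmul.comp (measurable_fst.fst.prodMk measurable_fst.snd)
    have h2 : Measurable fun x : (ℝ × V3) × (ℝ × V3) => x.2.1 • x.2.2 :=
      hsmul.comp (measurable_snd.fst.prodMk measurable_snd.snd)
    exact h1.sub h2
  have hinv : Measurable fun x : (ℝ × V3) × (ℝ × V3) => (x.1.1 - x.2.1)⁻¹ :=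
    (measurable_fst.fst.sub measurable_snd.fst).inv
  have hT : Measurable fun x : (ℝ × V3) × (ℝ × V3) =>
      (x.1.1 - x.2.1)⁻¹ • (x.1.1 • x.1.2 - x.2.1 • x.2.2) :=
    hsmul.comp (hinv.prodMk hvec)
  have hβ : Measurable fun x : (ℝ × V3) × (ℝ × V3) =>
      collBeta (x.1.1 - x.2.1) x.2.1 :=
    (continuous_collBeta_comp
      (continuous_fst.fst.sub continuous_snd.fst) continuous_snd.fst).measurable
  have hnrm : Measurable fun x : (ℝ × V3) × (ℝ × V3) =>
      ‖(x.1.1 - x.2.1)⁻¹ • (x.1.1 • x.1.2 - x.2.1 • x.2.2) - x.2.2‖ :=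
    (hT.sub measurable_snd.snd).norm
  have hf1 : Measurable fun x : (ℝ × V3) × (ℝ × V3) =>
      f (x.1.1 - x.2.1, (x.1.1 - x.2.1)⁻¹ • (x.1.1 • x.1.2 - x.2.1 • x.2.2)) :=
    hf_cont.measurable.comp ((measurable_fst.fst.sub measurable_snd.fst).prodMk hT)
  have hf2 : Measurable fun x : (ℝ × V3) × (ℝ × V3) => f x.2 :=
    hf_cont.measurable.comp measurable_snd
  have hJ : Measurable fun x : (ℝ × V3) × (ℝ × V3) =>
      (x.1.1 / (x.1.1 - x.2.1)) ^ 3 :=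
    (measurable_fst.fst.div (measurable_fst.fst.sub measurable_snd.fst)).pow measurable_const
  have hw : Measurable fun x : (ℝ × V3) × (ℝ × V3) => wgt j x.1 := by
    unfold wgt
    exact measurable_fst.fst.mul ((measurable_pi_apply j).comp measurable_fst.snd)
  unfold G0 collB
  exact hw.mul (((((hβ.mul hnrm).mul hf1).mul hf2)).mul hJ)

/-! #### The change-of-variables transfer on the first pair -/

/-- Core computation: slice integrability and slice integral identity after the
affine change of variables `u = (w/v) • uw + (vs/v) • us`, `v = w + vs`. -/
lemma core (vs : ℝ) (us : V3) (hvs : 0 < vs) (g n : ℝ × V3 → ℝ)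
    (hnsec : ∀ w : ℝ, Integrable (fun uw : V3 => n (w, uw)) (volume : Measure V3))
    (hg0 : ∀ v : ℝ, v ≤ vs → ∀ u : V3, g (v, u) = 0)
    (hn0 : ∀ w : ℝ, w ≤ 0 → ∀ uw : V3, n (w, uw) = 0)
    (hrel : ∀ w : ℝ, 0 < w → ∀ uw : V3,
      g (w + vs, (w / (w + vs)) • uw + (vs / (w + vs)) • us)
        = ((w + vs) / w) ^ 3 * n (w, uw)) :
    (∀ v : ℝ, Integrable (fun u : V3 => g (v, u)) (volume : Measure V3)) ∧
      ∀ v : ℝ, (∫ u : V3, g (v, u)) = ∫ uw : V3, n (v - vs, uw) := by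
  have stepA : ∀ v : ℝ, vs < v → ∀ u : V3,
      g (v, u) = (v / (v - vs)) ^ 3 *
        n (v - vs, ((v - vs) / v)⁻¹ • u - ((v - vs) / v)⁻¹ • ((vs / v) • us)) := by
    intro v hv u
    have hv0 : 0 < v := hvs.trans hv
    have hw : 0 < v - vs := sub_pos.2 hv
    have hc : (v - vs) / v ≠ 0 := div_ne_zero hw.ne' hv0.ne'
    have h := hrel (v - vs) hw (((v - vs) / v)⁻¹ • (u - (vs / v) • us))
    rw [sub_add_cancel] at h
    rw [smul_smul, mul_inv_cancel₀ hc, one_smul, sub_add_cancel] at h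
    rw [h, smul_sub]
  constructor
  · intro v
    rcases le_or_gt v vs with hv | hv
    · exact (integrable_zero _ _ _).congr
        (Filter.Eventually.of_forall fun u => (hg0 v hv u).symm)
    · have hv0 : 0 < v := hvs.trans hv
      have hw : 0 < v - vs := sub_pos.2 hv
      have hc : (v - vs) / v ≠ 0 := div_ne_zero hw.ne' hv0.ne'
      have h1 : Integrable (fun y : V3 => n (v - vs, y)) (volume : Measure V3) := hnsec _
      have h2 : Integrable
          (fun y : V3 => n (v - vs, y - ((v - vs) / v)⁻¹ • ((vs / v) • us)))
          (volume : Measure V3) := h1.comp_sub_right _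
      have h3 : Integrable
          (fun u : V3 => n (v - vs,
            ((v - vs) / v)⁻¹ • u - ((v - vs) / v)⁻¹ • ((vs / v) • us)))
          (volume : Measure V3) := by
        have h4 := h2.comp_smul (inv_ne_zero hc)
        simpa [smul_sub] using h4
      exact (h3.const_mul ((v / (v - vs)) ^ 3)).congr
        (Filter.Eventually.of_forall fun u => (stepA v hv u).symm)
  · intro v
    rcases le_or_gt v vs with hv | hv
    · have h1 : ∀ u : V3, g (v, u) = 0 := hg0 v hv
      have h2 : ∀ uw : V3, n (v - vs, uw) = 0 := hn0 _ (by linarith)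
      simp [h1, h2]
    · have hv0 : 0 < v := hvs.trans hv
      have hw : 0 < v - vs := sub_pos.2 hv
      have hc0 : 0 < (v - vs) / v := div_pos hw hv0
      have hc : (v - vs) / v ≠ 0 := hc0.ne'
      calc (∫ u : V3, g (v, u))
          = ∫ u : V3, (v / (v - vs)) ^ 3 *
              (fun y : V3 => n (v - vs, y - ((v - vs) / v)⁻¹ • ((vs / v) • us)))
                (((v - vs) / v)⁻¹ • u) := by
            exact integral_congr_ae (Filter.Eventually.of_forall fun u => stepA v hv u)
        _ = (v / (v - vs)) ^ 3 * ∫ u : V3,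
              (fun y : V3 => n (v - vs, y - ((v - vs) / v)⁻¹ • ((vs / v) • us)))
                (((v - vs) / v)⁻¹ • u) := integral_const_mul _ _
        _ = (v / (v - vs)) ^ 3 * (|((((v - vs) / v)⁻¹) ^ Module.finrank ℝ V3)⁻¹| •
              ∫ y : V3, n (v - vs, y - ((v - vs) / v)⁻¹ • ((vs / v) • us))) := by
            rw [Measure.integral_comp_smul (volume : Measure V3)
              (fun y : V3 => n (v - vs, y - ((v - vs) / v)⁻¹ • ((vs / v) • us)))
              (((v - vs) / v)⁻¹)]
        _ = (v / (v - vs)) ^ 3 * (((v - vs) / v) ^ 3 *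
              ∫ y : V3, n (v - vs, y - ((v - vs) / v)⁻¹ • ((vs / v) • us))) := by
            rw [Module.finrank_fin_fun, inv_pow, inv_inv, smul_eq_mul,
              abs_of_pos (pow_pos hc0 3)]
        _ = (v / (v - vs)) ^ 3 * (((v - vs) / v) ^ 3 * ∫ y : V3, n (v - vs, y)) := by
            rw [integral_sub_right_eq_self (fun y : V3 => n (v - vs, y))]
        _ = ∫ uw : V3, n (v - vs, uw) := by
            rw [← mul_assoc, ← mul_pow]
            have h5 : v / (v - vs) * ((v - vs) / v) = 1 := by
              field_simp
            rw [h5, one_pow, one_mul]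

/-- Full transfer: integrability and equality of integrals (and of integrals of norms)
between the gain-side integrand and the symmetrized kernel, in the first pair. -/
lemma transfer (vs : ℝ) (us : V3) (hvs : 0 < vs) (g n : ℝ × V3 → ℝ)
    (hgm : AEStronglyMeasurable g volP)
    (hn : Integrable n volP)
    (hnsec : ∀ w : ℝ, Integrable (fun uw : V3 => n (w, uw)) (volume : Measure V3))
    (hg0 : ∀ v : ℝ, v ≤ vs → ∀ u : V3, g (v, u) = 0)
    (hn0 : ∀ w : ℝ, w ≤ 0 → ∀ uw : V3, n (w, uw) = 0)
    (hrel : ∀ w : ℝ, 0 < w → ∀ uw : V3,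
      g (w + vs, (w / (w + vs)) • uw + (vs / (w + vs)) • us)
        = ((w + vs) / w) ^ 3 * n (w, uw)) :
    Integrable g volP ∧
      ((∫ p : ℝ × V3, g p ∂volP) = ∫ p : ℝ × V3, n p ∂volP) ∧
      ((∫ p : ℝ × V3, ‖g p‖ ∂volP) = ∫ p : ℝ × V3, ‖n p‖ ∂volP) := by
  obtain ⟨hgsec, hgB⟩ := core vs us hvs g n hnsec hg0 hn0 hrel
  have hrelN : ∀ w : ℝ, 0 < w → ∀ uw : V3,
      ‖g (w + vs, (w / (w + vs)) • uw + (vs / (w + vs)) • us)‖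
        = ((w + vs) / w) ^ 3 * ‖n (w, uw)‖ := by
    intro w hw uw
    rw [hrel w hw uw, norm_mul, Real.norm_eq_abs,
      abs_of_pos (pow_pos (div_pos (by linarith) hw) 3)]
  obtain ⟨hgsecN, hgBN⟩ := core vs us hvs (fun p => ‖g p‖) (fun p => ‖n p‖)
    (fun w => (hnsec w).norm)
    (fun v hv u => by show ‖g (v, u)‖ = 0; rw [hg0 v hv u, norm_zero])
    (fun w hw uw => by show ‖n (w, uw)‖ = 0; rw [hn0 w hw uw, norm_zero]) hrelN
  have hNnorm : Integrable (fun w : ℝ => ∫ uw : V3, ‖n (w, uw)‖) (volume : Measure ℝ) :=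
    hn.integral_norm_prod_left
  have hint : Integrable g volP := by
    refine (integrable_prod_iff hgm).2 ⟨Filter.Eventually.of_forall hgsec, ?_⟩
    exact (hNnorm.comp_sub_right vs).congr
      (Filter.Eventually.of_forall fun v => (hgBN v).symm)
  refine ⟨hint, ?_, ?_⟩
  · rw [integral_prod g hint, integral_prod n hn]
    calc (∫ v : ℝ, ∫ u : V3, g (v, u))
        = ∫ v : ℝ, (fun w : ℝ => ∫ uw : V3, n (w, uw)) (v - vs) :=
          integral_congr_ae (Filter.Eventually.of_forall fun v => hgB v)
      _ = ∫ w : ℝ, ∫ uw : V3, n (w, uw) :=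
          integral_sub_right_eq_self (fun w : ℝ => ∫ uw : V3, n (w, uw)) vs
  · rw [integral_prod _ hint.norm, integral_prod _ hn.norm]
    calc (∫ v : ℝ, ∫ u : V3, ‖g (v, u)‖)
        = ∫ v : ℝ, (fun w : ℝ => ∫ uw : V3, ‖n (w, uw)‖) (v - vs) :=
          integral_congr_ae (Filter.Eventually.of_forall fun v => hgBN v)
      _ = ∫ w : ℝ, ∫ uw : V3, ‖n (w, uw)‖ :=
          integral_sub_right_eq_self (fun w : ℝ => ∫ uw : V3, ‖n (w, uw)‖) vs

/-- The main per-`q` statement. -/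
lemma main_q (hf_cont : Continuous f) (hf_cpt : HasCompactSupport f)
    (hf_supp : Function.support f ⊆ Ioi (0:ℝ) ×ˢ (univ : Set V3)) (j : Fin 3) (q : ℝ × V3) :
    Integrable (fun p : ℝ × V3 => wgt j p * G0 f p q) volP ∧
      ((∫ p : ℝ × V3, wgt j p * G0 f p q ∂volP)
        = ∫ p : ℝ × V3, (wgt j p + wgt j q) * K0 f p q ∂volP) ∧
      ((∫ p : ℝ × V3, ‖wgt j p * G0 f p q‖ ∂volP)
        = ∫ p : ℝ × V3, ‖(wgt j p + wgt j q) * K0 f p q‖ ∂volP) := by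
  rcases le_or_gt q.1 0 with hq | hq
  · have hfq : f q = 0 := fzero' hf_supp hq
    have hG : ∀ p : ℝ × V3, wgt j p * G0 f p q = 0 := fun p => by simp [G0, hfq]
    have hK : ∀ p : ℝ × V3, (wgt j p + wgt j q) * K0 f p q = 0 := fun p => by simp [K0, hfq]
    refine ⟨(integrable_zero _ _ _).congr
      (Filter.Eventually.of_forall fun p => (hG p).symm), ?_, ?_⟩
    · simp [hG, hK]
    · simp [hG, hK]
  · -- q.1 > 0 : apply the transfer lemma
    have hWcont : Continuous fun p : ℝ × V3 => wgt j p + wgt j q :=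
      (continuous_wgt j).add continuous_const
    have hn : Integrable (fun p : ℝ × V3 => (wgt j p + wgt j q) * K0 f p q) volP :=
      integrableWq hf_cont hf_cpt hWcont q
    have hnsec : ∀ w : ℝ, Integrable
        (fun uw : V3 => (wgt j (w, uw) + wgt j q) * K0 f (w, uw) q) (volume : Measure V3) :=
      fun w => integrable_sect hf_cont hf_cpt hWcont q w
    have hgm : AEStronglyMeasurable (fun p : ℝ × V3 => wgt j p * G0 f p q) volP := by
      have hme : Measurable fun p : ℝ × V3 => wgt j p * G0 f p q := by
        have hpair : Measurable fun p : ℝ × V3 => ((p, q) : (ℝ × V3) × (ℝ × V3)) :=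
          measurable_id.prodMk measurable_const
        have h := (measurable_Gw hf_cont j).comp hpair
        exact h
      exact hme.aestronglyMeasurable
    have hg0 : ∀ v : ℝ, v ≤ q.1 → ∀ u : V3, wgt j (v, u) * G0 f (v, u) q = 0 := by
      intro v hv u
      have : f (v - q.1, (v - q.1)⁻¹ • (v • u - q.1 • q.2)) = 0 :=
        fzero hf_supp (by linarith) _
      simp [G0, this]
    have hn0 : ∀ w : ℝ, w ≤ 0 → ∀ uw : V3,
        (wgt j (w, uw) + wgt j q) * K0 f (w, uw) q = 0 := by
      intro w hw uw
      have : f (w, uw) = 0 := fzero hf_supp hw uw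
      simp [K0, this]
    have hrel : ∀ w : ℝ, 0 < w → ∀ uw : V3,
        wgt j (w + q.1, (w / (w + q.1)) • uw + (q.1 / (w + q.1)) • q.2) *
            G0 f (w + q.1, (w / (w + q.1)) • uw + (q.1 / (w + q.1)) • q.2) q
          = ((w + q.1) / w) ^ 3 *
            ((wgt j (w, uw) + wgt j q) * K0 f (w, uw) q) := by
      intro w hw uw
      have hv : 0 < w + q.1 := by linarith
      have h1 : (w + q.1) * (w / (w + q.1)) = w := by field_simp
      have h2 : (w + q.1) * (q.1 / (w + q.1)) = q.1 := by field_simp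
      have hT : (w + q.1 - q.1)⁻¹ •
          ((w + q.1) • ((w / (w + q.1)) • uw + (q.1 / (w + q.1)) • q.2) - q.1 • q.2) = uw := by
        rw [smul_add, smul_smul, smul_smul, h1, h2, add_sub_cancel_right, add_sub_cancel_right,
          smul_smul, inv_mul_cancel₀ hw.ne', one_smul]
      have happ : ((w / (w + q.1)) • uw + (q.1 / (w + q.1)) • q.2) j
          = (w / (w + q.1)) * uw j + (q.1 / (w + q.1)) * q.2 j := by
        simp [Pi.add_apply, Pi.smul_apply, smul_eq_mul]
      have hwgt : wgt j ((w + q.1, (w / (w + q.1)) • uw + (q.1 / (w + q.1)) • q.2) : ℝ × V3)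
          = wgt j ((w, uw) : ℝ × V3) + wgt j q := by
        unfold wgt
        simp only [happ]
        field_simp <;> ring
      unfold G0 K0
      rw [hwgt]
      simp only [add_sub_cancel_right] at hT ⊢
      rw [hT]
      ring
    obtain ⟨h1, h2, h3⟩ := transfer q.1 q.2 hq _ _ hgm hn hnsec hg0 hn0 hrel
    exact ⟨h1, h2, h3⟩

end Main

end CoalAux

open CoalAux

/-- Momentum conservation under coalescence: the momentum moment of the
coalescence term vanishes componentwise, `∫∫ v uⱼ Γ(v,u) dv du = 0` for `j = 1,2,3`. -/
theorem coalescence_momentum_conservation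
    (f : ℝ × V3 → ℝ) (hf_cont : Continuous f) (hf_nonneg : ∀ p, 0 ≤ f p)
    (hf_cpt : HasCompactSupport f)
    (hf_supp : Function.support f ⊆ Ioi (0:ℝ) ×ˢ (univ : Set V3)) :
    ∀ j : Fin 3, (∫ u : V3, ∫ v in Ioi (0:ℝ), v * u j * coalGamma f v u) = 0 := by
  intro j
  -- the integrands on the 8-dimensional space
  have hN1 : Integrable (fun x : (ℝ × V3) × (ℝ × V3) => wgt j x.1 * K0 f x.1 x.2)
      (volP.prod volP) :=
    integrableW hf_cont hf_cpt ((continuous_wgt j).comp continuous_fst)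
  have hN1' : Integrable (fun x : (ℝ × V3) × (ℝ × V3) => wgt j x.2 * K0 f x.1 x.2)
      (volP.prod volP) :=
    integrableW hf_cont hf_cpt ((continuous_wgt j).comp continuous_snd)
  have hN2 : Integrable (fun x : (ℝ × V3) × (ℝ × V3) => (wgt j x.1 + wgt j x.2) * K0 f x.1 x.2)
      (volP.prod volP) :=
    integrableW hf_cont hf_cpt
      (((continuous_wgt j).comp continuous_fst).add ((continuous_wgt j).comp continuous_snd))
  -- gain-side integrand on the 8-dimensional space
  have hGw_meas : AEStronglyMeasurable (fun x : (ℝ × V3) × (ℝ × V3) => wgt j x.1 * G0 f x.1 x.2)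
      (volP.prod volP) := (measurable_Gw hf_cont j).aestronglyMeasurable
  have hmq := main_q (f := f) hf_cont hf_cpt hf_supp j
  have hGw_int : Integrable (fun x : (ℝ × V3) × (ℝ × V3) => wgt j x.1 * G0 f x.1 x.2)
      (volP.prod volP) := by
    refine (integrable_prod_iff' hGw_meas).2 ⟨Filter.Eventually.of_forall fun q => (hmq q).1, ?_⟩
    refine (hN2.integral_norm_prod_right).congr
      (Filter.Eventually.of_forall fun q => ?_)
    exact ((hmq q).2.2).symm
  -- equality of the 8-dimensional integrals (change of variables)
  have hGw_eq : (∫ x : (ℝ × V3) × (ℝ × V3), wgt j x.1 * G0 f x.1 x.2 ∂(volP.prod volP))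
      = ∫ x : (ℝ × V3) × (ℝ × V3), (wgt j x.1 + wgt j x.2) * K0 f x.1 x.2
          ∂(volP.prod volP) := by
    rw [integral_prod_symm _ hGw_int, integral_prod_symm _ hN2]
    exact integral_congr_ae (Filter.Eventually.of_forall fun q => (hmq q).2.1)
  -- symmetry of the kernel
  have hK0symm : ∀ p q : ℝ × V3, K0 f p q = K0 f q p := by
    intro p q
    unfold K0 collB collBeta
    rw [norm_sub_rev]
    ring
  have hswap : (∫ x : (ℝ × V3) × (ℝ × V3), wgt j x.2 * K0 f x.1 x.2 ∂(volP.prod volP))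
      = ∫ x : (ℝ × V3) × (ℝ × V3), wgt j x.1 * K0 f x.1 x.2 ∂(volP.prod volP) := by
    have h := integral_prod_swap (μ := volP) (ν := volP)
      (fun x : (ℝ × V3) × (ℝ × V3) => wgt j x.1 * K0 f x.1 x.2)
    calc (∫ x : (ℝ × V3) × (ℝ × V3), wgt j x.2 * K0 f x.1 x.2 ∂(volP.prod volP))
        = ∫ x : (ℝ × V3) × (ℝ × V3),
            (fun z : (ℝ × V3) × (ℝ × V3) => wgt j z.1 * K0 f z.1 z.2) x.swap
              ∂(volP.prod volP) := by
          refine integral_congr_ae (Filter.Eventually.of_forall fun x => ?_)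
          show wgt j x.2 * K0 f x.1 x.2 = wgt j x.2 * K0 f x.2 x.1
          rw [hK0symm x.1 x.2]
      _ = ∫ x : (ℝ × V3) × (ℝ × V3), wgt j x.1 * K0 f x.1 x.2 ∂(volP.prod volP) := h
  have hN2split : (∫ x : (ℝ × V3) × (ℝ × V3), (wgt j x.1 + wgt j x.2) * K0 f x.1 x.2
      ∂(volP.prod volP))
      = 2 * ∫ x : (ℝ × V3) × (ℝ × V3), wgt j x.1 * K0 f x.1 x.2 ∂(volP.prod volP) := by
    have h1 : (∫ x : (ℝ × V3) × (ℝ × V3), (wgt j x.1 + wgt j x.2) * K0 f x.1 x.2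
        ∂(volP.prod volP))
        = ∫ x : (ℝ × V3) × (ℝ × V3),
            (wgt j x.1 * K0 f x.1 x.2 + wgt j x.2 * K0 f x.1 x.2) ∂(volP.prod volP) := by
      refine integral_congr_ae (Filter.Eventually.of_forall fun x => ?_)
      ring
    rw [h1, integral_add hN1 hN1', hswap]
    ring
  -- pointwise identities for the Q⁻ and Q⁺ moments
  have hloss : ∀ p : ℝ × V3, wgt j p * Qminus f p.1 p.2
      = -(∫ q : ℝ × V3, wgt j p * K0 f p q ∂volP) := by
    intro p
    have hstep1 : ∀ us : V3, (∫ vs in Ioi (0:ℝ), K0 f p (vs, us))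
        = ∫ vs : ℝ, K0 f p (vs, us) := by
      intro us
      apply setIntegral_eq_integral_of_forall_compl_eq_zero
      intro vs hvs
      have : f (vs, us) = 0 := fzero hf_supp (by simpa using hvs) us
      simp [K0, this]
    have hQm : Qminus f p.1 p.2 = -(∫ q : ℝ × V3, K0 f p q ∂volP) := by
      have hform : Qminus f p.1 p.2
          = -(∫ us : V3, ∫ vs in Ioi (0:ℝ), K0 f p (vs, us)) := by
        unfold Qminus K0
        simp
      rw [hform]
      congr 1
      rw [integral_prod_symm _ (integrableKp hf_cont hf_cpt p)]
      exact integral_congr_ae (Filter.Eventually.of_forall fun us => (hstep1 us))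
    rw [hQm, mul_neg, ← integral_const_mul]
  have hgain : ∀ᵐ p ∂volP, wgt j p * Qplus f p.1 p.2
      = 2⁻¹ * ∫ q : ℝ × V3, wgt j p * G0 f p q ∂volP := by
    filter_upwards [hGw_int.prod_right_ae] with p hp
    by_cases hw : wgt j p = 0
    · simp [hw]
    · have hG0int : Integrable (fun q : ℝ × V3 => G0 f p q) volP := by
        have h6 := hp.const_mul (wgt j p)⁻¹
        refine h6.congr (Filter.Eventually.of_forall fun q => ?_)
        show (wgt j p)⁻¹ * (wgt j p * G0 f p q) = G0 f p q
        rw [← mul_assoc, inv_mul_cancel₀ hw, one_mul]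
      have hstep1 : ∀ us : V3, (∫ vs in Ioo (0:ℝ) p.1, G0 f p (vs, us))
          = ∫ vs : ℝ, G0 f p (vs, us) := by
        intro us
        apply setIntegral_eq_integral_of_forall_compl_eq_zero
        intro vs hvs
        rcases le_or_gt vs 0 with h | h
        · have : f (vs, us) = 0 := fzero hf_supp h us
          simp [G0, this]
        · have hle : p.1 ≤ vs := by
            by_contra hlt
            exact hvs (Set.mem_Ioo.2 ⟨h, not_le.1 hlt⟩)
          have : f (p.1 - vs, (p.1 - vs)⁻¹ • (p.1 • p.2 - vs • us)) = 0 :=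
            fzero hf_supp (by linarith) _
          simp [G0, this]
      have hQp : Qplus f p.1 p.2 = 2⁻¹ * ∫ q : ℝ × V3, G0 f p q ∂volP := by
        have hform : Qplus f p.1 p.2
            = (1/2) * ∫ us : V3, ∫ vs in Ioo (0:ℝ) p.1, G0 f p (vs, us) := by
          unfold Qplus G0
          simp
        rw [hform, one_div]
        congr 1
        rw [integral_prod_symm _ hG0int]
        exact integral_congr_ae (Filter.Eventually.of_forall fun us => (hstep1 us))
      rw [hQp, ← mul_assoc, mul_comm (wgt j p) 2⁻¹, mul_assoc, ← integral_const_mul]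
  -- the inner set integral is a full integral
  have hvanish : ∀ u : V3, (∫ v in Ioi (0:ℝ), v * u j * coalGamma f v u)
      = ∫ v : ℝ, v * u j * coalGamma f v u := by
    intro u
    apply setIntegral_eq_integral_of_forall_compl_eq_zero
    intro v hv
    have hvle : v ≤ 0 := by simpa using hv
    have hQm : Qminus f v u = 0 := by
      have : f (v, u) = 0 := fzero hf_supp hvle u
      unfold Qminus
      simp [this]
    have hQp : Qplus f v u = 0 := by
      unfold Qplus
      rw [Set.Ioo_eq_empty (by intro h; exact absurd (h.trans_le hvle) (lt_irrefl _))]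
      simp
    simp [coalGamma, hQm, hQp]
  -- the function of p
  have hF1int : Integrable (fun p : ℝ × V3 => ∫ q : ℝ × V3, wgt j p * K0 f p q ∂volP) volP :=
    hN1.integral_prod_left
  have hF2int : Integrable (fun p : ℝ × V3 => ∫ q : ℝ × V3, wgt j p * G0 f p q ∂volP) volP :=
    hGw_int.integral_prod_left
  have hhae : (fun p : ℝ × V3 => p.1 * p.2 j * coalGamma f p.1 p.2)
      =ᵐ[volP] fun p => -(∫ q : ℝ × V3, wgt j p * K0 f p q ∂volP)
        + 2⁻¹ * ∫ q : ℝ × V3, wgt j p * G0 f p q ∂volP := by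
    filter_upwards [hgain] with p hp
    have h7 : p.1 * p.2 j * coalGamma f p.1 p.2
        = wgt j p * Qminus f p.1 p.2 + wgt j p * Qplus f p.1 p.2 := by
      unfold coalGamma wgt
      ring
    rw [h7, hloss p, hp]
  have hhint : Integrable (fun p : ℝ × V3 => p.1 * p.2 j * coalGamma f p.1 p.2) volP := by
    have hA : Integrable
        (fun p : ℝ × V3 => -(∫ q : ℝ × V3, wgt j p * K0 f p q ∂volP)) volP := hF1int.neg
    have hB : Integrable
        (fun p : ℝ × V3 => 2⁻¹ * ∫ q : ℝ × V3, wgt j p * G0 f p q ∂volP) volP :=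
      hF2int.const_mul 2⁻¹
    exact (hA.add hB).congr hhae.symm
  calc (∫ u : V3, ∫ v in Ioi (0:ℝ), v * u j * coalGamma f v u)
      = ∫ u : V3, ∫ v : ℝ, v * u j * coalGamma f v u :=
        integral_congr_ae (Filter.Eventually.of_forall fun u => hvanish u)
    _ = ∫ p : ℝ × V3, p.1 * p.2 j * coalGamma f p.1 p.2 ∂volP :=
        (integral_prod_symm _ hhint).symm
    _ = ∫ p : ℝ × V3, (-(∫ q : ℝ × V3, wgt j p * K0 f p q ∂volP)
          + 2⁻¹ * ∫ q : ℝ × V3, wgt j p * G0 f p q ∂volP) ∂volP := integral_congr_ae hhae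
    _ = -(∫ p : ℝ × V3, ∫ q : ℝ × V3, wgt j p * K0 f p q ∂volP ∂volP)
          + 2⁻¹ * ∫ p : ℝ × V3, ∫ q : ℝ × V3, wgt j p * G0 f p q ∂volP ∂volP := by
        have hA : Integrable
            (fun p : ℝ × V3 => -(∫ q : ℝ × V3, wgt j p * K0 f p q ∂volP)) volP := hF1int.neg
        have hB : Integrable
            (fun p : ℝ × V3 => 2⁻¹ * ∫ q : ℝ × V3, wgt j p * G0 f p q ∂volP) volP :=
          hF2int.const_mul 2⁻¹
        rw [integral_add hA hB, integral_neg, integral_const_mul]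
    _ = 0 := by
        have e1 : (∫ p : ℝ × V3, ∫ q : ℝ × V3, wgt j p * K0 f p q ∂volP ∂volP)
            = ∫ x : (ℝ × V3) × (ℝ × V3), wgt j x.1 * K0 f x.1 x.2 ∂(volP.prod volP) :=
          integral_integral hN1
        have e2 : (∫ p : ℝ × V3, ∫ q : ℝ × V3, wgt j p * G0 f p q ∂volP ∂volP)
            = ∫ x : (ℝ × V3) × (ℝ × V3), wgt j x.1 * G0 f x.1 x.2 ∂(volP.prod volP) :=
          integral_integral hGw_int
        rw [e1, e2, hGw_eq, hN2split]
        ring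

end
end

section
/- Droplet trajectories remain straight under proportional drag: let V : (0,∞) → ℝ be continuous, c : [0,T] → ℝ be continuous, and let z, r, u_z, u_r : [0,T] → ℝ be differentiable with z(t) > 0, satisfying z' = u_z, r' = u_r, u_z' = c(t)(V(z) − u_z), and u_r' = c(t)( r V(z)/z − u_r ). If r(0) u_z(0) = z(0) u_r(0), then r(t) u_z(t) = z(t) u_r(t) for all t ∈ [0,T] (equivalently u_r/r = u_z/z wherever r ≠ 0), and r(t)/z(t) is constant on [0,T]. -/
open Set

/-- Droplet trajectories remain straight under proportional drag: with
continuous `V : (0,∞) → ℝ` and `c : [0,T] → ℝ`, if `z' = u_z`, `r' = u_r`,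
`u_z' = c(t)(V(z) - u_z)`, `u_r' = c(t)(r V(z)/z - u_r)` on `[0,T]` with
`z > 0`, and `r(0) u_z(0) = z(0) u_r(0)`, then `r u_z = z u_r` on `[0,T]`
and `r/z` is constant on `[0,T]`. -/
theorem droplet_trajectories_straight
    (V : ℝ → ℝ) (hV : ContinuousOn V (Ioi (0:ℝ)))
    (T : ℝ) (hT : 0 < T)
    (c z r uz ur : ℝ → ℝ)
    (hc : ContinuousOn c (Icc 0 T))
    (hzpos : ∀ t ∈ Icc 0 T, 0 < z t)
    (hz : ∀ t ∈ Icc 0 T, HasDerivAt z (uz t) t)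
    (hr : ∀ t ∈ Icc 0 T, HasDerivAt r (ur t) t)
    (huz : ∀ t ∈ Icc 0 T, HasDerivAt uz (c t * (V (z t) - uz t)) t)
    (hur : ∀ t ∈ Icc 0 T, HasDerivAt ur (c t * (r t * V (z t) / z t - ur t)) t)
    (h0 : r 0 * uz 0 = z 0 * ur 0) :
    (∀ t ∈ Icc 0 T, r t * uz t = z t * ur t) ∧
    (∀ t ∈ Icc 0 T, r t / z t = r 0 / z 0) := by
  set W : ℝ → ℝ := fun t => r t * uz t - z t * ur t with hW
  have hW0 : W 0 = 0 := by simp [hW, h0]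
  -- derivative of W
  have hWderiv : ∀ t ∈ Icc 0 T, HasDerivAt W (-(c t) * W t) t := by
    intro t ht
    have h := ((hr t ht).mul (huz t ht)).sub ((hz t ht).mul (hur t ht))
    refine HasDerivAt.congr_deriv h ?_
    have hzne : z t ≠ 0 := (hzpos t ht).ne'
    field_simp [hW]
    ring
  -- bound on c
  obtain ⟨K, hK⟩ : ∃ K, ∀ t ∈ Icc (0:ℝ) T, ‖c t‖ ≤ K :=
    (isCompact_Icc.exists_bound_of_continuousOn hc)
  have hWcont : ContinuousOn W (Icc 0 T) := fun t ht =>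
    ((hWderiv t ht).continuousAt).continuousWithinAt
  have hWzero : ∀ t ∈ Icc 0 T, W t = 0 := by
    intro t ht
    have := norm_le_gronwallBound_of_norm_deriv_right_le (a := 0) (b := T)
      (f := W) (f' := fun t => -(c t) * W t) (δ := 0) (K := K) (ε := 0)
      hWcont
      (fun s hs => ((hWderiv s (Ico_subset_Icc_self hs)).hasDerivWithinAt))
      (by simp [hW0])
      (fun s hs => by
        have hs' : s ∈ Icc (0:ℝ) T := Ico_subset_Icc_self hs
        calc ‖-(c s) * W s‖ = ‖c s‖ * ‖W s‖ := by
              rw [norm_mul, norm_neg]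
          _ ≤ K * ‖W s‖ := by
              exact mul_le_mul_of_nonneg_right (hK s hs') (norm_nonneg _)
          _ ≤ K * ‖W s‖ + 0 := by linarith)
      t ht
    have : ‖W t‖ ≤ 0 := by simpa [gronwallBound_ε0] using this
    exact norm_le_zero_iff.mp this
  have hmain : ∀ t ∈ Icc 0 T, r t * uz t = z t * ur t := by
    intro t ht
    have := hWzero t ht
    simp only [hW] at this
    linarith
  refine ⟨hmain, ?_⟩
  -- r/z constant
  have hder : ∀ t ∈ Icc 0 T, HasDerivAt (fun s => r s / z s) 0 t := by
    intro t ht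
    have hzne : z t ≠ 0 := (hzpos t ht).ne'
    have h := (hr t ht).div (hz t ht) hzne
    refine HasDerivAt.congr_deriv h ?_
    have := hmain t ht
    field_simp
    linarith
  have hcont : ContinuousOn (fun s => r s / z s) (Icc 0 T) := fun t ht =>
    ((hder t ht).continuousAt).continuousWithinAt
  intro t ht
  exact constant_of_has_deriv_right_zero hcont
    (fun s hs => (hder s (Ico_subset_Icc_self hs)).hasDerivWithinAt) t ht
end

section
/- Reduction of the DQMOM nozzle system without coalescence: let R : (0,∞) → ℝ and F : (0,∞)×(0,∞) → ℝ, and let w, v, ξ : I → ℝ be differentiable on an interval I with w > 0, v > 0, ξ > 0, satisfying (wξ)' = 0, (wvξ)' = w R(v), and (wvξ²)' = w ξ R(v) + w v F(v,ξ) on I. Then ξ v' = R(v) and ξ ξ' = F(v,ξ) on I. -/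
open Set

/-- Reduction of the DQMOM nozzle system without coalescence: if positive
differentiable `w, v, ξ` on an interval `I` satisfy `(wξ)' = 0`,
`(wvξ)' = w R(v)`, `(wvξ²)' = w ξ R(v) + w v F(v,ξ)`, then `ξ v' = R(v)` and
`ξ ξ' = F(v,ξ)` on `I`. -/
theorem dqmom_nozzle_reduction
    (R : ℝ → ℝ) (F : ℝ → ℝ → ℝ)
    (I : Set ℝ)
    (w v ξ : ℝ → ℝ)
    (hw : ∀ z ∈ I, DifferentiableAt ℝ w z)
    (hv : ∀ z ∈ I, DifferentiableAt ℝ v z)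
    (hξ : ∀ z ∈ I, DifferentiableAt ℝ ξ z)
    (hwpos : ∀ z ∈ I, 0 < w z)
    (hvpos : ∀ z ∈ I, 0 < v z)
    (hξpos : ∀ z ∈ I, 0 < ξ z)
    (h1 : ∀ z ∈ I, deriv (fun s => w s * ξ s) z = 0)
    (h2 : ∀ z ∈ I, deriv (fun s => w s * v s * ξ s) z = w z * R (v z))
    (h3 : ∀ z ∈ I, deriv (fun s => w s * v s * ξ s ^ 2) z =
      w z * ξ z * R (v z) + w z * v z * F (v z) (ξ z)) :
    ∀ z ∈ I, ξ z * deriv v z = R (v z) ∧ ξ z * deriv ξ z = F (v z) (ξ z) := by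
  intro z hz
  have e1 := h1 z hz
  have e2 := h2 z hz
  have e3 := h3 z hz
  rw [deriv_fun_mul (hw z hz) (hξ z hz)] at e1
  rw [deriv_fun_mul (c := fun s => w s * v s) ((hw z hz).mul (hv z hz)) (hξ z hz),
      deriv_fun_mul (hw z hz) (hv z hz)] at e2
  simp only [pow_two] at e3
  rw [deriv_fun_mul (c := fun s => w s * v s) ((hw z hz).mul (hv z hz)) (d := fun s => ξ s * ξ s) ((hξ z hz).mul (hξ z hz)),
      deriv_fun_mul (hw z hz) (hv z hz), deriv_fun_mul (hξ z hz) (hξ z hz)] at e3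
  have hw0 := (hwpos z hz).ne'
  have hv0 := (hvpos z hz).ne'
  constructor
  · apply mul_left_cancel₀ hw0
    linear_combination e2 - v z * e1
  · apply mul_left_cancel₀ (mul_ne_zero hw0 hv0)
    linear_combination e3 - ξ z * e2
end
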